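/- Let C_{n,r} be the lollipop graph with girth r ≡ 1 (mod 6) and n ≡ 0 (mod 3). Then 1 is a Laplacian eigenvalue of C_{n,r} with multiplicity exactly 1. -/

import Mathlib

open SimpleGraph Matrix Polynomial

/-- The Laplacian matrix of a simple graph over `ℝ`. -/
noncomputable def lapR {V : Type} [Fintype V] [DecidableEq V] (G : SimpleGraph V) :
    Matrix V V ℝ :=
  letI := Classical.decRel G.Adj
  G.lapMatrix ℝ

/-- The multiset of Laplacian eigenvalues of a graph, counted with multiplicity,
given as the roots of the characteristic polynomial of the Laplacian matrix. -/
noncomputable def lapEigs {V : Type} [Fintype V] [DecidableEq V] (G : SimpleGraph V) :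
    Multiset ℝ :=
  (lapR G).charpoly.roots

/-- `m_G[0,1)`: the number of Laplacian eigenvalues of `G` in `[0,1)`, with multiplicity. -/
noncomputable def mIco01 {V : Type} [Fintype V] [DecidableEq V] (G : SimpleGraph V) : ℕ :=
  letI : DecidablePred (fun x : ℝ => 0 ≤ x ∧ x < 1) := Classical.decPred _
  Multiset.card ((lapEigs G).filter (fun x => 0 ≤ x ∧ x < 1))

/-- `m_G(μ)`: the multiplicity of `μ` as a Laplacian eigenvalue of `G`. -/
noncomputable def mEig {V : Type} [Fintype V] [DecidableEq V] (G : SimpleGraph V) (μ : ℝ) : ℕ :=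
  Multiset.count μ (lapEigs G)

/-- The lollipop graph `C_{n,r}` on vertices `0, …, n-1`: the path `0-1-⋯-(n-1)` together
with the extra edge joining `0` and `r-1`, so that `0, 1, …, r-1` form a cycle of length `r`
with a pendant path on `n - r` vertices attached at the cycle vertex `r-1`. -/
def lollipop (n r : ℕ) : SimpleGraph (Fin n) :=
  SimpleGraph.fromRel (fun i j => (i : ℕ) + 1 = (j : ℕ) ∨ ((i : ℕ) = 0 ∧ (j : ℕ) = r - 1))


section SpectralAux
variable {n : Type} [Fintype n] [DecidableEq n] {A : Matrix n n ℝ}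


lemma charpoly_conj {U D V : Matrix n n ℝ} (hUV : U * V = 1) (hVU : V * U = 1) :
    (U * D * V).charpoly = D.charpoly := by
  have hmap : ∀ M N : Matrix n n ℝ, (M * N).map (C : ℝ →+* ℝ[X]) = M.map C * N.map C := by
    intro M N; exact Matrix.map_mul
  have h1 : charmatrix (U * D * V) = U.map C * charmatrix D * V.map C := by
    unfold charmatrix
    rw [Matrix.mul_sub, Matrix.sub_mul]
    congr 1
    · rw [mul_assoc, scalar_commute X (fun M => (Commute.all _ M)) _, ← mul_assoc, ← hmap, hUV]
      simp
    · simp only [RingHom.mapMatrix_apply, hmap]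
  rw [Matrix.charpoly, Matrix.charpoly, h1, det_mul, det_mul, mul_comm, ← mul_assoc, ← det_mul,
    ← hmap, hVU]
  simp

lemma charpoly_diag (d : n → ℝ) :
    (diagonal d).charpoly = ∏ i, (X - C (d i)) := by
  rw [Matrix.charpoly]
  have : charmatrix (diagonal d) = diagonal (fun i => X - C (d i)) := by
    unfold charmatrix
    rw [scalar_apply, RingHom.mapMatrix_apply, diagonal_map (map_zero C), ← diagonal_sub]
  rw [this, det_diagonal]

lemma herm_charpoly (hA : A.IsHermitian) :
    A.charpoly = ∏ i, (X - C (hA.eigenvalues i)) := by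
  have hsp := hA.spectral_theorem
  have hU1 : (hA.eigenvectorUnitary : Matrix n n ℝ) * star (hA.eigenvectorUnitary : Matrix n n ℝ) = 1 :=
    (Matrix.mem_unitaryGroup_iff).mp hA.eigenvectorUnitary.2
  have hU2 : star (hA.eigenvectorUnitary : Matrix n n ℝ) * (hA.eigenvectorUnitary : Matrix n n ℝ) = 1 :=
    (Matrix.mem_unitaryGroup_iff').mp hA.eigenvectorUnitary.2
  calc A.charpoly = ((hA.eigenvectorUnitary : Matrix n n ℝ) * diagonal (RCLike.ofReal ∘ hA.eigenvalues)
      * (star (hA.eigenvectorUnitary : Matrix n n ℝ))).charpoly := by exact congrArg Matrix.charpoly hsp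
    _ = (diagonal (RCLike.ofReal ∘ hA.eigenvalues)).charpoly := charpoly_conj hU1 hU2
    _ = ∏ i, (X - C (hA.eigenvalues i)) := by rw [charpoly_diag]; rfl

lemma herm_roots_count (hA : A.IsHermitian) (μ : ℝ) :
    A.charpoly.roots.count μ = Fintype.card {i // hA.eigenvalues i = μ} := by
  rw [herm_charpoly hA]
  have : ∏ i, (X - C (hA.eigenvalues i)) =
      ((Finset.univ.val.map hA.eigenvalues).map fun a => X - C a).prod := by
    rw [Multiset.map_map]; rfl
  rw [this, roots_multiset_prod_X_sub_C, Multiset.count_map, Fintype.card_subtype]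
  congr 1
  rw [Finset.filter_val]
  congr 1
  ext i
  exact eq_comm

lemma herm_sub_smul (hA : A.IsHermitian) (μ : ℝ) :
    A - μ • 1 = (hA.eigenvectorUnitary : Matrix n n ℝ) * diagonal (fun i => hA.eigenvalues i - μ)
      * (star (hA.eigenvectorUnitary : Matrix n n ℝ)) := by
  have hU1 : (hA.eigenvectorUnitary : Matrix n n ℝ) * star (hA.eigenvectorUnitary : Matrix n n ℝ) = 1 :=
    (Matrix.mem_unitaryGroup_iff).mp hA.eigenvectorUnitary.2
  have h2 : (hA.eigenvectorUnitary : Matrix n n ℝ) * (μ • (1 : Matrix n n ℝ))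
      * (star (hA.eigenvectorUnitary : Matrix n n ℝ)) = μ • 1 := by
    rw [Matrix.mul_smul, Matrix.mul_one, Matrix.smul_mul, hU1]
  have hd : diagonal (fun i => hA.eigenvalues i - μ)
      = diagonal (RCLike.ofReal ∘ hA.eigenvalues) - μ • 1 := by
    rw [← Matrix.diagonal_one, ← Matrix.diagonal_smul, ← diagonal_sub]
    congr 1 <;> ext i j <;> simp [Matrix.diagonal_apply] <;> split <;> simp_all
  conv_lhs => rw [hA.spectral_theorem, ← h2]
  rw [hd, Matrix.mul_sub, Matrix.sub_mul]
  rfl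

lemma herm_nullity (hA : A.IsHermitian) (μ : ℝ) :
    Module.finrank ℝ (LinearMap.ker (A - μ • 1).mulVecLin)
      = Fintype.card {i // hA.eigenvalues i = μ} := by
  have hU1 : (hA.eigenvectorUnitary : Matrix n n ℝ) * star (hA.eigenvectorUnitary : Matrix n n ℝ) = 1 :=
    (Matrix.mem_unitaryGroup_iff).mp hA.eigenvectorUnitary.2
  have hdU : IsUnit (hA.eigenvectorUnitary : Matrix n n ℝ).det := by
    have := congrArg Matrix.det hU1
    rw [det_mul, det_one] at this
    exact IsUnit.of_mul_eq_one _ this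
  have hdV : IsUnit (star (hA.eigenvectorUnitary : Matrix n n ℝ)).det := by
    have := congrArg Matrix.det hU1
    rw [det_mul, det_one] at this
    exact IsUnit.of_mul_eq_one _ (by rw [mul_comm] at this; exact this)
  have hrank : (A - μ • 1).rank = Fintype.card {i // hA.eigenvalues i - μ ≠ 0} := by
    rw [herm_sub_smul hA μ, Matrix.rank_mul_eq_left_of_isUnit_det _ _ hdV,
      Matrix.rank_mul_eq_right_of_isUnit_det _ _ hdU, Matrix.rank_diagonal]
  have hrn : (A - μ • 1).rank + Module.finrank ℝ (LinearMap.ker (A - μ • 1).mulVecLin)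
      = Fintype.card n := by
    rw [Matrix.rank]
    rw [LinearMap.finrank_range_add_finrank_ker]
    simp [Module.finrank_fintype_fun_eq_card]
  have hcards : Fintype.card {i // hA.eigenvalues i - μ ≠ 0}
      + Fintype.card {i // hA.eigenvalues i = μ} = Fintype.card n := by
    have : ∀ i, (hA.eigenvalues i - μ ≠ 0) ↔ ¬ (hA.eigenvalues i = μ) := fun i => sub_ne_zero
    rw [Fintype.card_congr (Equiv.subtypeEquivRight this)]
    rw [add_comm, Fintype.card_subtype_compl]
    have := Fintype.card_subtype_le (fun i => hA.eigenvalues i = μ)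
    omega
  omega

lemma herm_mult_eq_nullity (hA : A.IsHermitian) (μ : ℝ) :
    A.charpoly.roots.count μ = Module.finrank ℝ (LinearMap.ker (A - μ • 1).mulVecLin) := by
  rw [herm_roots_count hA μ, herm_nullity hA μ]

end SpectralAux

lemma lapR_eq {V : Type} [Fintype V] [DecidableEq V] (G : SimpleGraph V)
    [inst : DecidableRel G.Adj] : lapR G = G.lapMatrix ℝ := by
  unfold lapR
  congr!

lemma lollipop_adj {n r : ℕ} (i j : Fin n) :
    (lollipop n r).Adj i j ↔ (i : ℕ) ≠ j ∧ ((i : ℕ) + 1 = j ∨ (j : ℕ) + 1 = i ∨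
      ((i : ℕ) = 0 ∧ (j : ℕ) = r - 1) ∨ ((j : ℕ) = 0 ∧ (i : ℕ) = r - 1)) := by
  simp only [lollipop, SimpleGraph.fromRel_adj, ne_eq, Fin.ext_iff]
  tauto

def gval (k : ℕ) : ℝ :=
  if k % 6 = 0 then 1 else if k % 6 = 1 then 0 else if k % 6 = 2 then -1
  else if k % 6 = 3 then -1 else if k % 6 = 4 then 0 else 1

def hval (k : ℕ) : ℝ :=
  if k % 6 = 0 then 0 else if k % 6 = 1 then 1 else if k % 6 = 2 then 1
  else if k % 6 = 3 then 0 else if k % 6 = 4 then -1 else -1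

lemma grec (k : ℕ) : gval (k + 2) = gval (k + 1) - gval k := by
  unfold gval
  have h : k % 6 = 0 ∨ k % 6 = 1 ∨ k % 6 = 2 ∨ k % 6 = 3 ∨ k % 6 = 4 ∨ k % 6 = 5 := by omega
  rcases h with h|h|h|h|h|h <;>
    [(have h1 : (k+1) % 6 = 1 := by omega); (have h1 : (k+1) % 6 = 2 := by omega);
     (have h1 : (k+1) % 6 = 3 := by omega); (have h1 : (k+1) % 6 = 4 := by omega);
     (have h1 : (k+1) % 6 = 5 := by omega); (have h1 : (k+1) % 6 = 0 := by omega)] <;>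
    [(have h2 : (k+2) % 6 = 2 := by omega); (have h2 : (k+2) % 6 = 3 := by omega);
     (have h2 : (k+2) % 6 = 4 := by omega); (have h2 : (k+2) % 6 = 5 := by omega);
     (have h2 : (k+2) % 6 = 0 := by omega); (have h2 : (k+2) % 6 = 1 := by omega)] <;>
    rw [h, h1, h2] <;> norm_num

lemma hrec (k : ℕ) : hval (k + 2) = hval (k + 1) - hval k := by
  unfold hval
  have h : k % 6 = 0 ∨ k % 6 = 1 ∨ k % 6 = 2 ∨ k % 6 = 3 ∨ k % 6 = 4 ∨ k % 6 = 5 := by omega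
  rcases h with h|h|h|h|h|h <;>
    [(have h1 : (k+1) % 6 = 1 := by omega); (have h1 : (k+1) % 6 = 2 := by omega);
     (have h1 : (k+1) % 6 = 3 := by omega); (have h1 : (k+1) % 6 = 4 := by omega);
     (have h1 : (k+1) % 6 = 5 := by omega); (have h1 : (k+1) % 6 = 0 := by omega)] <;>
    [(have h2 : (k+2) % 6 = 2 := by omega); (have h2 : (k+2) % 6 = 3 := by omega);
     (have h2 : (k+2) % 6 = 4 := by omega); (have h2 : (k+2) % 6 = 5 := by omega);
     (have h2 : (k+2) % 6 = 0 := by omega); (have h2 : (k+2) % 6 = 1 := by omega)] <;>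
    rw [h, h1, h2] <;> norm_num

lemma gval_of_mod {k m : ℕ} (h : k % 6 = m) :
    gval k = if m = 0 then 1 else if m = 1 then 0 else if m = 2 then -1
      else if m = 3 then -1 else if m = 4 then 0 else 1 := by
  unfold gval; rw [h]

lemma hval_of_mod {k m : ℕ} (h : k % 6 = m) :
    hval k = if m = 0 then 0 else if m = 1 then 1 else if m = 2 then 1
      else if m = 3 then 0 else if m = 4 then -1 else -1 := by
  unfold hval; rw [h]

section NB
variable {n r : ℕ} [DecidableRel (lollipop n r).Adj]

lemma N0 (hr7 : 7 ≤ r) (hnr : r + 2 ≤ n) :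
    (lollipop n r).neighborFinset ⟨0, by omega⟩ =
      {(⟨1, by omega⟩ : Fin n), ⟨r - 1, by omega⟩} := by
  ext u
  have hu := u.isLt
  simp only [SimpleGraph.mem_neighborFinset, lollipop_adj, Finset.mem_insert,
    Finset.mem_singleton, Fin.ext_iff, true_and, and_true]
  omega

lemma Nmid (hr7 : 7 ≤ r) (hnr : r + 2 ≤ n) (k : ℕ) (hk : k + 3 ≤ n) (hne : k + 1 ≠ r - 1) :
    (lollipop n r).neighborFinset ⟨k + 1, by omega⟩ =
      {(⟨k, by omega⟩ : Fin n), ⟨k + 2, by omega⟩} := by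
  ext u
  have hu := u.isLt
  simp only [SimpleGraph.mem_neighborFinset, lollipop_adj, Finset.mem_insert,
    Finset.mem_singleton, Fin.ext_iff, true_and, and_true]
  omega

lemma Nr (hr7 : 7 ≤ r) (hnr : r + 2 ≤ n) :
    (lollipop n r).neighborFinset ⟨r - 1, by omega⟩ =
      {(⟨r - 2, by omega⟩ : Fin n), ⟨r, by omega⟩, ⟨0, by omega⟩} := by
  ext u
  have hu := u.isLt
  simp only [SimpleGraph.mem_neighborFinset, lollipop_adj, Finset.mem_insert,
    Finset.mem_singleton, Fin.ext_iff, true_and, and_true]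
  omega

lemma Nend (hr7 : 7 ≤ r) (hnr : r + 2 ≤ n) :
    (lollipop n r).neighborFinset ⟨n - 1, by omega⟩ = {(⟨n - 2, by omega⟩ : Fin n)} := by
  ext u
  have hu := u.isLt
  simp only [SimpleGraph.mem_neighborFinset, lollipop_adj, Finset.mem_singleton, Fin.ext_iff, true_and, and_true]
  omega

end NB

section EQ
variable {n r : ℕ} [DecidableRel (lollipop n r).Adj] {x : Fin n → ℝ}
  (hx : ∀ v, ((lollipop n r).lapMatrix ℝ *ᵥ x) v = x v)

include hx

lemma Emid (hr7 : 7 ≤ r) (hnr : r + 2 ≤ n) (k : ℕ) (hk : k + 3 ≤ n) (hne : k + 1 ≠ r - 1) :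
    x ⟨k + 2, by omega⟩ = x ⟨k + 1, by omega⟩ - x ⟨k, by omega⟩ := by
  have h := hx ⟨k + 1, by omega⟩
  have hne2 : (⟨k, by omega⟩ : Fin n) ≠ ⟨k + 2, by omega⟩ := by simp [Fin.ext_iff]
  rw [SimpleGraph.lapMatrix_mulVec_apply, ← SimpleGraph.card_neighborFinset_eq_degree,
    Nmid hr7 hnr k hk hne, Finset.sum_pair hne2, Finset.card_pair hne2] at h
  push_cast at h
  linarith

lemma E0 (hr7 : 7 ≤ r) (hnr : r + 2 ≤ n) :
    x ⟨1, by omega⟩ = x ⟨0, by omega⟩ - x ⟨r - 1, by omega⟩ := by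
  have h := hx ⟨0, by omega⟩
  have hne2 : (⟨1, by omega⟩ : Fin n) ≠ ⟨r - 1, by omega⟩ := by simp [Fin.ext_iff]; omega
  rw [SimpleGraph.lapMatrix_mulVec_apply, ← SimpleGraph.card_neighborFinset_eq_degree,
    N0 hr7 hnr, Finset.sum_pair hne2, Finset.card_pair hne2] at h
  push_cast at h
  linarith

lemma Er (hr7 : 7 ≤ r) (hnr : r + 2 ≤ n) :
    x ⟨r, by omega⟩ = 2 * x ⟨r - 1, by omega⟩ - x ⟨r - 2, by omega⟩ - x ⟨0, by omega⟩ := by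
  have h := hx ⟨r - 1, by omega⟩
  have h12 : (⟨r - 2, by omega⟩ : Fin n) ≠ ⟨r, by omega⟩ := by simp [Fin.ext_iff]; omega
  have h13 : (⟨r - 2, by omega⟩ : Fin n) ≠ ⟨0, by omega⟩ := by simp [Fin.ext_iff]; omega
  have h23 : (⟨r, by omega⟩ : Fin n) ≠ ⟨0, by omega⟩ := by simp [Fin.ext_iff]; omega
  have hcard : ({(⟨r - 2, by omega⟩ : Fin n), ⟨r, by omega⟩, ⟨0, by omega⟩} : Finset (Fin n)).card = 3 := by
    rw [Finset.card_insert_of_notMem (by simp [h12, h13]), Finset.card_pair h23]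
  have hsum : ∑ u ∈ ({(⟨r - 2, by omega⟩ : Fin n), ⟨r, by omega⟩, ⟨0, by omega⟩} : Finset (Fin n)), x u
      = x ⟨r - 2, by omega⟩ + x ⟨r, by omega⟩ + x ⟨0, by omega⟩ := by
    rw [Finset.sum_insert (by simp [h12, h13]), Finset.sum_pair h23]
    ring
  rw [SimpleGraph.lapMatrix_mulVec_apply, ← SimpleGraph.card_neighborFinset_eq_degree,
    Nr hr7 hnr, hsum, hcard] at h
  push_cast at h
  linarith

lemma Eend (hr7 : 7 ≤ r) (hnr : r + 2 ≤ n) : x ⟨n - 2, by omega⟩ = 0 := by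
  have h := hx ⟨n - 1, by omega⟩
  rw [SimpleGraph.lapMatrix_mulVec_apply, ← SimpleGraph.card_neighborFinset_eq_degree,
    Nend hr7 hnr, Finset.sum_singleton, Finset.card_singleton] at h
  push_cast at h
  linarith

end EQ

section VF
variable {n r : ℕ} [DecidableRel (lollipop n r).Adj] (x : Fin n → ℝ)

lemma Vmid (hr7 : 7 ≤ r) (hnr : r + 2 ≤ n) (k : ℕ) (hk : k + 3 ≤ n) (hne : k + 1 ≠ r - 1) :
    ((lollipop n r).lapMatrix ℝ *ᵥ x) ⟨k + 1, by omega⟩ =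
      2 * x ⟨k + 1, by omega⟩ - (x ⟨k, by omega⟩ + x ⟨k + 2, by omega⟩) := by
  have hne2 : (⟨k, by omega⟩ : Fin n) ≠ ⟨k + 2, by omega⟩ := by simp [Fin.ext_iff]
  rw [SimpleGraph.lapMatrix_mulVec_apply, ← SimpleGraph.card_neighborFinset_eq_degree,
    Nmid hr7 hnr k hk hne, Finset.sum_pair hne2, Finset.card_pair hne2]
  push_cast
  ring

lemma V0 (hr7 : 7 ≤ r) (hnr : r + 2 ≤ n) :
    ((lollipop n r).lapMatrix ℝ *ᵥ x) ⟨0, by omega⟩ =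
      2 * x ⟨0, by omega⟩ - (x ⟨1, by omega⟩ + x ⟨r - 1, by omega⟩) := by
  have hne2 : (⟨1, by omega⟩ : Fin n) ≠ ⟨r - 1, by omega⟩ := by simp [Fin.ext_iff]; omega
  rw [SimpleGraph.lapMatrix_mulVec_apply, ← SimpleGraph.card_neighborFinset_eq_degree,
    N0 hr7 hnr, Finset.sum_pair hne2, Finset.card_pair hne2]
  push_cast
  ring

lemma Vr (hr7 : 7 ≤ r) (hnr : r + 2 ≤ n) :
    ((lollipop n r).lapMatrix ℝ *ᵥ x) ⟨r - 1, by omega⟩ =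
      3 * x ⟨r - 1, by omega⟩ - (x ⟨r - 2, by omega⟩ + x ⟨r, by omega⟩ + x ⟨0, by omega⟩) := by
  have h12 : (⟨r - 2, by omega⟩ : Fin n) ≠ ⟨r, by omega⟩ := by simp [Fin.ext_iff]; omega
  have h13 : (⟨r - 2, by omega⟩ : Fin n) ≠ ⟨0, by omega⟩ := by simp [Fin.ext_iff]; omega
  have h23 : (⟨r, by omega⟩ : Fin n) ≠ ⟨0, by omega⟩ := by simp [Fin.ext_iff]; omega
  rw [SimpleGraph.lapMatrix_mulVec_apply, ← SimpleGraph.card_neighborFinset_eq_degree,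
    Nr hr7 hnr, Finset.sum_insert (by simp [h12, h13]), Finset.sum_pair h23,
    Finset.card_insert_of_notMem (by simp [h12, h13]), Finset.card_pair h23]
  push_cast
  ring

lemma Vend (hr7 : 7 ≤ r) (hnr : r + 2 ≤ n) :
    ((lollipop n r).lapMatrix ℝ *ᵥ x) ⟨n - 1, by omega⟩ =
      x ⟨n - 1, by omega⟩ - x ⟨n - 2, by omega⟩ := by
  rw [SimpleGraph.lapMatrix_mulVec_apply, ← SimpleGraph.card_neighborFinset_eq_degree,
    Nend hr7 hnr, Finset.sum_singleton, Finset.card_singleton]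
  push_cast
  ring

end VF

lemma gval_rm1 {r : ℕ} (hr1 : r % 6 = 1) (hr7 : 7 ≤ r) : gval (r - 1) = 1 := by
  rw [gval_of_mod (show (r - 1) % 6 = 0 by omega)]; norm_num

lemma gval_rm2 {r : ℕ} (hr1 : r % 6 = 1) (hr7 : 7 ≤ r) : gval (r - 2) = 1 := by
  rw [gval_of_mod (show (r - 2) % 6 = 5 by omega)]; norm_num

lemma gval_r {r : ℕ} (hr1 : r % 6 = 1) : gval r = 0 := by
  rw [gval_of_mod hr1]; norm_num

lemma hval_rm1 {r : ℕ} (hr1 : r % 6 = 1) (hr7 : 7 ≤ r) : hval (r - 1) = 0 := by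
  rw [hval_of_mod (show (r - 1) % 6 = 0 by omega)]; norm_num

lemma gval_nm2 {n : ℕ} (hn3 : 3 ∣ n) (hn : 2 ≤ n) : gval (n - 2) = 0 := by
  have : (n - 2) % 6 = 1 ∨ (n - 2) % 6 = 4 := by omega
  rcases this with h | h <;> rw [gval_of_mod h] <;> norm_num

lemma lollipop_ker (n r : ℕ) [DecidableRel (lollipop n r).Adj]
    (hr7 : 7 ≤ r) (hr1 : r % 6 = 1) (hnr : r + 2 ≤ n) (hn3 : 3 ∣ n) :
    LinearMap.ker ((lollipop n r).lapMatrix ℝ - (1 : ℝ) • 1).mulVecLin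
      = Submodule.span ℝ {fun i : Fin n => gval i} := by
  have hmem : ∀ x : Fin n → ℝ, x ∈ LinearMap.ker ((lollipop n r).lapMatrix ℝ - (1 : ℝ) • 1).mulVecLin
      ↔ ∀ v, ((lollipop n r).lapMatrix ℝ *ᵥ x) v = x v := by
    intro x
    rw [LinearMap.mem_ker, mulVecLin_apply, sub_mulVec, one_smul, one_mulVec, sub_eq_zero,
      funext_iff]
  apply le_antisymm
  · -- ker ≤ span
    intro x hxk
    have hx := (hmem x).mp hxk
    rw [Submodule.mem_span_singleton]
    refine ⟨x ⟨0, by omega⟩, ?_⟩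
    -- cycle induction
    have A : ∀ k (hk : k ≤ r - 1), x ⟨k, by omega⟩
        = x ⟨0, by omega⟩ * gval k + x ⟨1, by omega⟩ * hval k := by
      intro k
      induction k using Nat.strong_induction_on with
      | _ k ih =>
        match k with
        | 0 => intro _; rw [gval_of_mod (show 0 % 6 = 0 from rfl),
            hval_of_mod (show 0 % 6 = 0 from rfl)]; norm_num
        | 1 => intro _; rw [gval_of_mod (show 1 % 6 = 1 from rfl),
            hval_of_mod (show 1 % 6 = 1 from rfl)]; norm_num
        | (m+2) =>
          intro hk
          have h1 := ih (m+1) (by omega) (by omega)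
          have h0 := ih m (by omega) (by omega)
          have he := Emid hx hr7 hnr m (by omega) (by omega)
          rw [he, h1, h0, grec, hrec]
          ring
    have hb : x ⟨1, by omega⟩ = 0 := by
      have h0 := E0 hx hr7 hnr
      have hA := A (r-1) (le_refl _)
      rw [gval_rm1 hr1 hr7, hval_rm1 hr1 hr7] at hA
      rw [hA] at h0
      linarith
    -- now x on cycle equals a * gval
    have A' : ∀ k (hk : k ≤ r - 1), x ⟨k, by omega⟩ = x ⟨0, by omega⟩ * gval k := by
      intro k hk
      rw [A k hk, hb]
      ring
    -- value at r
    have hAr : x ⟨r, by omega⟩ = x ⟨0, by omega⟩ * gval r := by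
      have her := Er hx hr7 hnr
      rw [her, A' (r-1) (le_refl _), A' (r-2) (by omega), gval_rm1 hr1 hr7, gval_rm2 hr1 hr7,
        gval_r hr1]
      ring
    -- full induction
    have B : ∀ k (hk : k < n), x ⟨k, by omega⟩ = x ⟨0, by omega⟩ * gval k := by
      intro k
      induction k using Nat.strong_induction_on with
      | _ k ih =>
        match k with
        | 0 => intro _; exact A' 0 (by omega)
        | 1 => intro _; exact A' 1 (by omega)
        | (m+2) =>
          intro hk
          by_cases hc : m + 2 ≤ r - 1
          · exact A' (m+2) hc
          · by_cases hc2 : m + 2 = r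
            · subst hc2; exact hAr
            · -- m+2 ≥ r+1, so vertex m+1 ≥ r > r-1 is a path interior vertex
              have h1 := ih (m+1) (by omega) (by omega)
              have h0 := ih m (by omega) (by omega)
              have he := Emid hx hr7 hnr m (by omega) (by omega)
              rw [he, h1, h0, grec]
              ring
    funext v
    obtain ⟨k, hk⟩ := v
    have := B k hk
    simpa using this.symm
  · -- span ≤ ker
    rw [Submodule.span_le, Set.singleton_subset_iff]
    rw [SetLike.mem_coe, hmem]
    intro v
    obtain ⟨k, hk⟩ := v
    show ((lollipop n r).lapMatrix ℝ *ᵥ fun i : Fin n => gval i) ⟨k, hk⟩ = gval k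
    rcases Nat.eq_or_lt_of_le (Nat.zero_le k) with h0 | hpos
    · -- k = 0
      have : k = 0 := h0.symm
      subst this
      rw [V0 (fun i : Fin n => gval i) hr7 hnr]
      show 2 * gval 0 - (gval 1 + gval (r-1)) = gval 0
      rw [gval_rm1 hr1 hr7, gval_of_mod (show 0 % 6 = 0 from rfl),
        gval_of_mod (show 1 % 6 = 1 from rfl)]
      norm_num
    · by_cases hrm : k = r - 1
      · subst hrm
        rw [Vr (fun i : Fin n => gval i) hr7 hnr]
        show 3 * gval (r-1) - (gval (r-2) + gval r + gval 0) = gval (r-1)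
        rw [gval_rm1 hr1 hr7, gval_rm2 hr1 hr7, gval_r hr1,
          gval_of_mod (show 0 % 6 = 0 from rfl)]
        norm_num
      · by_cases hend : k = n - 1
        · subst hend
          rw [Vend (fun i : Fin n => gval i) hr7 hnr]
          show gval (n-1) - gval (n-2) = gval (n-1)
          rw [gval_nm2 hn3 (by omega)]
          ring
        · -- interior: k = m+1 with m+3 ≤ n, m+1 ≠ r-1
          obtain ⟨m, rfl⟩ : ∃ m, k = m + 1 := ⟨k - 1, by omega⟩
          rw [Vmid (fun i : Fin n => gval i) hr7 hnr m (by omega) hrm]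
          show 2 * gval (m+1) - (gval m + gval (m+2)) = gval (m+1)
          rw [grec]
          ring

/-- If `r ≡ 1 (mod 6)` and `n ≡ 0 (mod 3)`, then `1` is a Laplacian eigenvalue of the
lollipop graph `C_{n,r}` with multiplicity exactly `1`. -/
theorem lollipop_eigenvalue_one_r_one_mod_six (n r : ℕ) (h3 : 3 ≤ r) (hrn : r ≤ n)
    (hr : r % 6 = 1) (hn : 3 ∣ n) :
    (1 : ℝ) ∈ lapEigs (lollipop n r) ∧ mEig (lollipop n r) 1 = 1 := by
  have hr7 : 7 ≤ r := by omega
  have hnr : r + 2 ≤ n := by omega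
  letI : DecidableRel (lollipop n r).Adj := Classical.decRel _
  have hlap : lapR (lollipop n r) = (lollipop n r).lapMatrix ℝ := lapR_eq _
  have hherm : (lapR (lollipop n r)).IsHermitian := by
    rw [hlap]; exact (SimpleGraph.posSemidef_lapMatrix ℝ (lollipop n r)).1
  have hker := lollipop_ker n r hr7 hr hnr hn
  have hg : (fun i : Fin n => gval i) ≠ (0 : Fin n → ℝ) := by
    intro h
    have h0 := congrFun h ⟨0, by omega⟩
    rw [show ((⟨0, by omega⟩ : Fin n) : ℕ) = 0 from rfl,
      gval_of_mod (show 0 % 6 = 0 from rfl)] at h0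
    norm_num at h0
  have hcount : mEig (lollipop n r) 1 = 1 := by
    rw [mEig, lapEigs, herm_mult_eq_nullity hherm 1, hlap, hker,
      finrank_span_singleton hg]
  refine ⟨Multiset.count_pos.mp ?_, hcount⟩
  unfold mEig at hcount
  omega
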